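/- arXiv:2002.05580 — 2 statements merged into one kernel-verified Lean document; each statement's English description precedes it below -/
import Mathlib

section
/- A graph admits a proper straight-line drawing with spanning ratio 1 if and only if it is isomorphic to the point visibility graph of some finite point set in ℝ². -/
noncomputable def wlen {V : Type*} {G : SimpleGraph V} (ρ : V → EuclideanSpace ℝ (Fin 2)) :
    ∀ {u v : V}, G.Walk u v → ℝ
  | _, _, SimpleGraph.Walk.nil => 0
  | u, _, SimpleGraph.Walk.cons (v := b) _ p => dist (ρ u) (ρ b) + wlen ρ p

/-- The point visibility graph of a finite point set `P ⊂ ℝ²`: two distinct points are adjacent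
iff the open segment between them contains no point of `P`. -/
def visGraph (P : Finset (EuclideanSpace ℝ (Fin 2))) : SimpleGraph P where
  Adj p q := p ≠ q ∧ ∀ r : P, (r : EuclideanSpace ℝ (Fin 2)) ∉
      openSegment ℝ (p : EuclideanSpace ℝ (Fin 2)) (q : EuclideanSpace ℝ (Fin 2))
  symm := by
    constructor
    rintro p q ⟨hne, h⟩
    exact ⟨hne.symm, by rw [openSegment_symm]; exact h⟩
  loopless := by constructor; rintro p ⟨hne, -⟩; exact hne rfl

open SimpleGraph

local notation "E2" => EuclideanSpace ℝ (Fin 2)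

@[simp] lemma wlen_nil {V : Type*} {G : SimpleGraph V} (ρ : V → E2) (u : V) :
    wlen ρ (Walk.nil : G.Walk u u) = 0 := rfl

@[simp] lemma wlen_cons {V : Type*} {G : SimpleGraph V} (ρ : V → E2) {u b v : V}
    (h : G.Adj u b) (p : G.Walk b v) :
    wlen ρ (Walk.cons h p) = dist (ρ u) (ρ b) + wlen ρ p := rfl

lemma dist_le_wlen {V : Type*} {G : SimpleGraph V} (ρ : V → E2) :
    ∀ {u v : V} (p : G.Walk u v), dist (ρ u) (ρ v) ≤ wlen ρ p
  | u, _, Walk.nil => by simp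
  | u, v, Walk.cons (v := b) h p => by
      have h1 := dist_le_wlen ρ p
      calc dist (ρ u) (ρ v) ≤ dist (ρ u) (ρ b) + dist (ρ b) (ρ v) := dist_triangle _ _ _
        _ ≤ wlen ρ (Walk.cons h p) := by rw [wlen_cons]; linarith

lemma wlen_append {V : Type*} {G : SimpleGraph V} (ρ : V → E2) {u v w : V}
    (p : G.Walk u v) (q : G.Walk v w) :
    wlen ρ (p.append q) = wlen ρ p + wlen ρ q := by
  induction p with
  | nil => simp
  | cons h p ih => simp [Walk.cons_append, ih]; ring

lemma wlen_copy {V : Type*} {G : SimpleGraph V} (ρ : V → E2) {u v u' v' : V}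
    (p : G.Walk u v) (hu : u = u') (hv : v = v') :
    wlen ρ (p.copy hu hv) = wlen ρ p := by subst hu; subst hv; rfl

lemma wlen_map {V W : Type*} {G : SimpleGraph V} {H : SimpleGraph W} (f : G →g H)
    (ρ : W → E2) {u v : V} (p : G.Walk u v) :
    wlen ρ (p.map f) = wlen (ρ ∘ f) p := by
  induction p with
  | nil => rfl
  | cons h p ih => simp [Walk.map_cons, ih]

lemma sbtw_of_mem_openSegment {x y z : E2} (hxz : x ≠ z) (h : y ∈ openSegment ℝ x z) :
    Sbtw ℝ x y z := by
  refine ⟨mem_segment_iff_wbtw.1 (openSegment_subset_segment ℝ x z h), ?_, ?_⟩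
  · rintro rfl; exact hxz (left_mem_openSegment_iff.1 h)
  · rintro rfl; exact hxz (right_mem_openSegment_iff.1 h)

lemma mem_openSegment_of_sbtw {x y z : E2} (h : Sbtw ℝ x y z) :
    y ∈ openSegment ℝ x z := by
  have h1 := h.wbtw.mem_segment
  rw [← insert_endpoints_openSegment] at h1
  rcases h1 with h1 | h1 | h1
  · exact absurd h1 h.ne_left
  · exact absurd h1 h.ne_right
  · exact h1

lemma vis_walk (P : Finset E2) (p q : P) :
    ∃ w : (visGraph P).Walk p q,
      wlen (Subtype.val : P → E2) w = dist (p : E2) (q : E2) := by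
  classical
  generalize hn : (P.filter fun s => s ∈ openSegment ℝ (p : E2) (q : E2)).card = n
  induction n using Nat.strong_induction_on generalizing p q with
  | _ n ih =>
    rcases eq_or_ne p q with rfl | hpq
    · exact ⟨Walk.nil, by simp⟩
    by_cases hadj : (visGraph P).Adj p q
    · exact ⟨Walk.cons hadj Walk.nil, by simp⟩
    · have hex : ∃ r : P, (r : E2) ∈ openSegment ℝ (p : E2) (q : E2) := by
        simp only [visGraph, hpq, ne_eq, not_false_eq_true, true_and, not_forall,
          not_not] at hadj
        exact hadj
      obtain ⟨r, hr⟩ := hex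
      have hpq' : (p : E2) ≠ (q : E2) := fun h => hpq (Subtype.ext h)
      have hs : Sbtw ℝ (p : E2) (r : E2) (q : E2) := sbtw_of_mem_openSegment hpq' hr
      have hrmem : (r : E2) ∈ P.filter fun s => s ∈ openSegment ℝ (p : E2) (q : E2) :=
        Finset.mem_filter.2 ⟨r.2, hr⟩
      have hsub1 : (P.filter fun s => s ∈ openSegment ℝ (p : E2) (r : E2)) ⊆
          (P.filter fun s => s ∈ openSegment ℝ (p : E2) (q : E2)).erase (r : E2) := by
        intro s hsmem
        obtain ⟨hsP, hso⟩ := Finset.mem_filter.1 hsmem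
        have hps : Sbtw ℝ (p : E2) s (r : E2) := sbtw_of_mem_openSegment hs.ne_left.symm hso
        have hpsq : Sbtw ℝ (p : E2) s (q : E2) := hs.trans_left hps
        exact Finset.mem_erase.2
          ⟨hps.ne_right, Finset.mem_filter.2 ⟨hsP, mem_openSegment_of_sbtw hpsq⟩⟩
      have hsub2 : (P.filter fun s => s ∈ openSegment ℝ (r : E2) (q : E2)) ⊆
          (P.filter fun s => s ∈ openSegment ℝ (p : E2) (q : E2)).erase (r : E2) := by
        intro s hsmem
        obtain ⟨hsP, hso⟩ := Finset.mem_filter.1 hsmem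
        have hrs : Sbtw ℝ (r : E2) s (q : E2) := sbtw_of_mem_openSegment hs.ne_right hso
        have hpsq : Sbtw ℝ (p : E2) s (q : E2) := hs.trans_right hrs
        exact Finset.mem_erase.2
          ⟨hrs.ne_left, Finset.mem_filter.2 ⟨hsP, mem_openSegment_of_sbtw hpsq⟩⟩
      have hlt : ∀ {Q : Finset E2},
          Q ⊆ (P.filter fun s => s ∈ openSegment ℝ (p : E2) (q : E2)).erase (r : E2) →
          Q.card < n := by
        intro Q hQ
        calc Q.card ≤ _ := Finset.card_le_card hQ
          _ < _ := Finset.card_erase_lt_of_mem hrmem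
          _ = n := hn
      obtain ⟨w1, hw1⟩ := ih _ (hlt hsub1) p r rfl
      obtain ⟨w2, hw2⟩ := ih _ (hlt hsub2) r q rfl
      refine ⟨w1.append w2, ?_⟩
      rw [wlen_append, hw1, hw2, hs.wbtw.dist_add_dist]

lemma adj_of_spanning {V : Type*} {G : SimpleGraph V} (ρ : V → E2)
    (hinj : Function.Injective ρ) :
    ∀ {u v : V} (p : G.Walk u v), wlen ρ p = dist (ρ u) (ρ v) →
      ρ u ≠ ρ v → (∀ w : V, ρ w ∉ openSegment ℝ (ρ u) (ρ v)) → G.Adj u v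
  | u, _, Walk.nil, _, hne, _ => absurd rfl hne
  | u, v, Walk.cons (v := b) h p, hlen, hne, hvis => by
    rcases eq_or_ne b v with rfl | hbv
    · exact h
    have h1 : dist (ρ b) (ρ v) ≤ wlen ρ p := dist_le_wlen ρ p
    have h2 : dist (ρ u) (ρ v) ≤ dist (ρ u) (ρ b) + dist (ρ b) (ρ v) := dist_triangle _ _ _
    rw [wlen_cons] at hlen
    have heq : dist (ρ u) (ρ b) + dist (ρ b) (ρ v) = dist (ρ u) (ρ v) := by linarith
    have hw : Wbtw ℝ (ρ u) (ρ b) (ρ v) := dist_add_dist_eq_iff.1 heq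
    have hsb : Sbtw ℝ (ρ u) (ρ b) (ρ v) :=
      ⟨hw, fun hh => h.ne (hinj hh).symm, fun hh => hbv (hinj hh)⟩
    exact absurd (mem_openSegment_of_sbtw hsb) (hvis b)

/-- A graph admits a proper straight-line drawing with spanning ratio 1 iff it is
(isomorphic to) a point visibility graph. -/
theorem proper_drawing_spanning_ratio_one_iff_pvg
    {V : Type*} [Fintype V] (G : SimpleGraph V) :
    (∃ ρ : V → EuclideanSpace ℝ (Fin 2), Function.Injective ρ ∧
      (∀ u v : V, G.Adj u v → ∀ w : V, ρ w ∉ openSegment ℝ (ρ u) (ρ v)) ∧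
      ∀ u v : V, ∃ p : G.Walk u v, wlen ρ p = dist (ρ u) (ρ v)) ↔
    (∃ P : Finset (EuclideanSpace ℝ (Fin 2)), Nonempty (G ≃g visGraph P)) := by
  classical
  constructor
  · rintro ⟨ρ, hinj, hproper, hspan⟩
    refine ⟨Finset.image ρ Finset.univ, ⟨?_⟩⟩
    have hmem : ∀ v, ρ v ∈ Finset.image ρ Finset.univ :=
      fun v => Finset.mem_image_of_mem _ (Finset.mem_univ v)
    have hbij : Function.Bijective
        (fun v => (⟨ρ v, hmem v⟩ : (Finset.image ρ Finset.univ : Finset E2))) := by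
      constructor
      · intro a b hab
        exact hinj (congrArg Subtype.val hab)
      · rintro ⟨x, hx⟩
        obtain ⟨v, -, rfl⟩ := Finset.mem_image.1 hx
        exact ⟨v, rfl⟩
    refine ⟨Equiv.ofBijective _ hbij, ?_⟩
    intro a b
    constructor
    · rintro ⟨hne, hvis⟩
      obtain ⟨w, hw⟩ := hspan a b
      refine adj_of_spanning ρ hinj w hw ?_ ?_
      · intro hh
        exact hne (Subtype.ext hh)
      · intro c hc
        exact hvis ⟨ρ c, hmem c⟩ hc
    · intro h
      refine ⟨?_, ?_⟩
      · intro hh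
        exact h.ne (hinj (congrArg Subtype.val hh))
      · rintro ⟨x, hx⟩ hmem'
        obtain ⟨c, -, rfl⟩ := Finset.mem_image.1 hx
        exact hproper a b h c hmem'
  · rintro ⟨P, ⟨e⟩⟩
    refine ⟨fun v => ((e v : P) : E2), ?_, ?_, ?_⟩
    · intro a b hab
      exact e.toEquiv.injective (Subtype.ext hab)
    · intro u v h w hmem
      exact (e.map_rel_iff.2 h).2 (e w) hmem
    · intro u v
      obtain ⟨w, hw⟩ := vis_walk P (e u) (e v)
      refine ⟨(w.map e.symm.toHom).copy (e.symm_apply_apply u) (e.symm_apply_apply v), ?_⟩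
      rw [wlen_copy, wlen_map]
      have hcomp : ((fun v => ((e v : P) : E2)) ∘ e.symm.toHom) = (Subtype.val : P → E2) :=
        funext fun x => congrArg Subtype.val (e.apply_symm_apply x)
      rw [hcomp, hw]
end

section
/- Let S be the star K_{1,n−1} on n vertices and s ≥ 1. Every straight-line drawing of S with spanning ratio at most s has edge-length ratio at least 2^{⌊(n−2)/(48 s²)⌋}, i.e., edge-length ratio in 2^{Ω(n/s²)}. -/
/-- The star `K_{1,n-1}` on `n` vertices: vertex `0` is the center, adjacent to all others. -/
def starGraph (n : ℕ) [NeZero n] : SimpleGraph (Fin n) where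
  Adj a b := a ≠ b ∧ (a = 0 ∨ b = 0)
  symm := ⟨by rintro a b ⟨h, h2⟩; exact ⟨h.symm, h2.symm⟩⟩
  loopless := ⟨by rintro a ⟨h, -⟩; exact h rfl⟩

open MeasureTheory Metric ENNReal in
lemma vol_ball2 (x : EuclideanSpace ℝ (Fin 2)) (r : ℝ) :
    volume (ball x r) = ENNReal.ofReal r ^ 2 * ENNReal.ofReal Real.pi := by
  rw [EuclideanSpace.volume_ball]
  norm_num [Real.Gamma_two, Real.sq_sqrt Real.pi_pos.le]

open MeasureTheory Metric ENNReal in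
lemma packing2 (P : Finset (EuclideanSpace ℝ (Fin 2))) (c : EuclideanSpace ℝ (Fin 2))
    (ε R : ℝ) (hε : 0 < ε)
    (hP : ∀ p ∈ P, dist p c ≤ R)
    (hsep : ∀ p ∈ P, ∀ q ∈ P, p ≠ q → 2 * ε ≤ dist p q) :
    (P.card : ℝ) * ε ^ 2 ≤ (R + ε) ^ 2 := by
  rcases P.eq_empty_or_nonempty with rfl | ⟨p0, hp0⟩
  · simpa using sq_nonneg (R + ε)
  have hR : 0 ≤ R + ε := by
    have := hP p0 hp0; have := dist_nonneg (x := p0) (y := c); linarith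
  have hdisj : (P : Set (EuclideanSpace ℝ (Fin 2))).PairwiseDisjoint (fun p => ball p ε) := by
    intro p hp q hq hpq
    exact ball_disjoint_ball (by linarith [hsep p hp q hq hpq])
  have h1 : ∑ p ∈ P, volume (ball p ε) = volume (⋃ p ∈ P, ball p ε) :=
    (measure_biUnion_finset hdisj fun p _ => measurableSet_ball).symm
  have h2 : (⋃ p ∈ P, ball p ε) ⊆ ball c (R + ε) := by
    intro y hy
    simp only [Set.mem_iUnion] at hy
    obtain ⟨p, hp, hyp⟩ := hy
    have hd : dist y p < ε := mem_ball.mp hyp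
    exact mem_ball.mpr (by
      have := hP p hp
      calc dist y c ≤ dist y p + dist p c := dist_triangle y p c
        _ < ε + R := by linarith
        _ = R + ε := by ring)
  have h3 : (P.card : ℝ≥0∞) * (ENNReal.ofReal ε ^ 2 * ENNReal.ofReal Real.pi)
      ≤ ENNReal.ofReal (R + ε) ^ 2 * ENNReal.ofReal Real.pi := by
    calc (P.card : ℝ≥0∞) * (ENNReal.ofReal ε ^ 2 * ENNReal.ofReal Real.pi)
        = ∑ p ∈ P, volume (ball p ε) := by
          simp [vol_ball2, Finset.sum_const, nsmul_eq_mul]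
      _ = volume (⋃ p ∈ P, ball p ε) := h1
      _ ≤ volume (ball c (R + ε)) := measure_mono h2
      _ = ENNReal.ofReal (R + ε) ^ 2 * ENNReal.ofReal Real.pi := vol_ball2 c _
  rw [← mul_assoc, ENNReal.mul_le_mul_iff_left (by simp [Real.pi_pos]) ENNReal.ofReal_ne_top] at h3
  have h4 : ENNReal.ofReal ((P.card : ℝ) * ε ^ 2) ≤ ENNReal.ofReal ((R + ε) ^ 2) := by
    rw [ENNReal.ofReal_mul (by positivity), ENNReal.ofReal_pow hε.le,
      ENNReal.ofReal_pow hR, ENNReal.ofReal_natCast]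
    exact h3
  exact (ENNReal.ofReal_le_ofReal_iff (by positivity)).mp h4

lemma wlen_ge {V : Type*} {G : SimpleGraph V} (ρ : V → EuclideanSpace ℝ (Fin 2)) :
    ∀ {u v : V} (p : G.Walk u v), dist (ρ u) (ρ v) ≤ wlen ρ p
  | _, _, SimpleGraph.Walk.nil => by simp [wlen]
  | u, v, SimpleGraph.Walk.cons (v := b) h p => by
      calc dist (ρ u) (ρ v) ≤ dist (ρ u) (ρ b) + dist (ρ b) (ρ v) := dist_triangle _ _ _
        _ ≤ dist (ρ u) (ρ b) + wlen ρ p := by linarith [wlen_ge ρ p]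
        _ = wlen ρ (SimpleGraph.Walk.cons h p) := rfl

lemma star_walk_lb {n : ℕ} [NeZero n] (ρ : Fin n → EuclideanSpace ℝ (Fin 2))
    {u v : Fin n} (hu : u ≠ 0) (hne : u ≠ v) (p : (starGraph n).Walk u v) :
    dist (ρ u) (ρ 0) + dist (ρ 0) (ρ v) ≤ wlen ρ p := by
  cases p with
  | nil => exact absurd rfl hne
  | @cons _ b _ h p =>
      have hb : b = 0 := h.2.resolve_left hu
      subst hb
      have heq : wlen ρ (SimpleGraph.Walk.cons h p) = dist (ρ u) (ρ 0) + wlen ρ p := rfl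
      rw [heq]
      linarith [wlen_ge ρ p]

lemma dyadic_bounds {q : ℝ} (hq : 1 ≤ q) :
    (2 : ℝ) ^ ⌊Real.logb 2 q⌋₊ ≤ q ∧ q < 2 ^ (⌊Real.logb 2 q⌋₊ + 1) := by
  have hq0 : 0 < q := lt_of_lt_of_le one_pos hq
  have hl : 0 ≤ Real.logb 2 q := Real.logb_nonneg one_lt_two hq
  constructor
  · calc (2 : ℝ) ^ ⌊Real.logb 2 q⌋₊ = (2 : ℝ) ^ ((⌊Real.logb 2 q⌋₊ : ℕ) : ℝ) :=
        (Real.rpow_natCast 2 _).symm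
      _ ≤ (2 : ℝ) ^ Real.logb 2 q := by
          rw [Real.rpow_le_rpow_left_iff one_lt_two]; exact Nat.floor_le hl
      _ = q := Real.rpow_logb two_pos (by norm_num) hq0
  · calc q = (2 : ℝ) ^ Real.logb 2 q := (Real.rpow_logb two_pos (by norm_num) hq0).symm
      _ < (2 : ℝ) ^ ((⌊Real.logb 2 q⌋₊ : ℝ) + 1) := by
          rw [Real.rpow_lt_rpow_left_iff one_lt_two]; exact Nat.lt_floor_add_one _
      _ = (2 : ℝ) ^ (⌊Real.logb 2 q⌋₊ + 1) := by
          rw [← Real.rpow_natCast 2 (⌊Real.logb 2 q⌋₊ + 1)]; push_cast; ring_nf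

lemma dyadic_lt {q : ℝ} (hq : 1 ≤ q) {t : ℕ} (h : q < 2 ^ t) : ⌊Real.logb 2 q⌋₊ < t := by
  have hq0 : 0 < q := lt_of_lt_of_le one_pos hq
  rw [Nat.floor_lt (Real.logb_nonneg one_lt_two hq)]
  calc Real.logb 2 q < Real.logb 2 (2 ^ t) := Real.logb_lt_logb one_lt_two hq0 h
    _ = t := by
        rw [← Real.rpow_natCast 2 t, Real.logb_rpow two_pos (by norm_num)]

/-- Any straight-line drawing of the star on `n` vertices with spanning ratio at most `s ≥ 1`
has edge-length ratio at least `2^⌊(n-2)/(48·s²)⌋`. -/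
theorem star_spanning_ratio_edge_length_ratio_lower_bound
    (n : ℕ) [NeZero n] (hn : 2 ≤ n)
    (ρ : Fin n → EuclideanSpace ℝ (Fin 2)) (hinj : Function.Injective ρ)
    (s : ℝ) (hs : 1 ≤ s)
    (hspan : ∀ u v : Fin n, u ≠ v →
      ∃ p : (starGraph n).Walk u v, wlen ρ p ≤ s * dist (ρ u) (ρ v)) :
    ∃ a b c e : Fin n, (starGraph n).Adj a b ∧ (starGraph n).Adj c e ∧
      (2 : ℝ) ^ ⌊((n : ℝ) - 2) / (48 * s ^ 2)⌋₊ * dist (ρ c) (ρ e) ≤ dist (ρ a) (ρ b) := by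
  classical
  have hs0 : 0 < s := lt_of_lt_of_le one_pos hs
  set x0 := ρ 0 with hx0
  have key : ∀ u v : Fin n, u ≠ 0 → v ≠ 0 → u ≠ v →
      dist (ρ u) x0 + dist x0 (ρ v) ≤ s * dist (ρ u) (ρ v) := by
    intro u v hu hv huv
    obtain ⟨p, hp⟩ := hspan u v huv
    exact le_trans (star_walk_lb ρ hu huv p) hp
  have h1n : 1 < n := lt_of_lt_of_le one_lt_two hn
  set L : Finset (Fin n) := Finset.univ.erase 0 with hL
  have hLcard : L.card = n - 1 := by
    simp [hL, Finset.card_erase_of_mem, Finset.card_univ]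
  have hb0 : (⟨1, h1n⟩ : Fin n) ∈ L := by
    simp [hL, Fin.ext_iff]
  obtain ⟨i0, hi0, hmin⟩ := L.exists_min_image (fun i => dist (ρ i) x0) ⟨_, hb0⟩
  have hi00 : i0 ≠ 0 := Finset.ne_of_mem_erase hi0
  set r0 := dist (ρ i0) x0 with hr0def
  have hr0 : 0 < r0 := dist_pos.mpr (fun h => hi00 (hinj h))
  set t := ⌊((n : ℝ) - 2) / (48 * s ^ 2)⌋₊ with ht
  have claim : ∃ j : Fin n, j ≠ 0 ∧ 2 ^ t * r0 ≤ dist (ρ j) x0 := by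
    by_contra hcon
    push_neg at hcon
    set K : Fin n → ℕ := fun j => ⌊Real.logb 2 (dist (ρ j) x0 / r0)⌋₊ with hK
    have hq1 : ∀ j ∈ L, 1 ≤ dist (ρ j) x0 / r0 := by
      intro j hj
      rw [le_div_iff₀ hr0, one_mul]
      exact hmin j hj
    have hKrange : ∀ j ∈ L, K j ∈ Finset.range t := by
      intro j hj
      refine Finset.mem_range.mpr (dyadic_lt (hq1 j hj) ?_)
      rw [div_lt_iff₀ hr0]
      exact hcon j (Finset.ne_of_mem_erase hj)
    have hcards := Finset.card_eq_sum_card_fiberwise hKrange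
    have hfib : ∀ k ∈ Finset.range t,
        ((L.filter fun j => K j = k).card : ℝ) ≤ 48 * s ^ 2 := by
      intro k _
      set A := L.filter fun j => K j = k with hA
      set rk : ℝ := 2 ^ k * r0 with hrk
      have hrkpos : 0 < rk := by positivity
      have hlow : ∀ j ∈ A, rk ≤ dist (ρ j) x0 := by
        intro j hj
        rw [hA, Finset.mem_filter] at hj
        have hKj : ⌊Real.logb 2 (dist (ρ j) x0 / r0)⌋₊ = k := hj.2
        have h1 := (dyadic_bounds (hq1 j hj.1)).1
        rw [hKj] at h1
        rw [hrk, ← le_div_iff₀ hr0]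
        exact h1
      have hhigh : ∀ j ∈ A, dist (ρ j) x0 < 2 * rk := by
        intro j hj
        rw [hA, Finset.mem_filter] at hj
        have hKj : ⌊Real.logb 2 (dist (ρ j) x0 / r0)⌋₊ = k := hj.2
        have h1 := (dyadic_bounds (hq1 j hj.1)).2
        rw [hKj] at h1
        rw [div_lt_iff₀ hr0] at h1
        calc dist (ρ j) x0 < 2 ^ (k + 1) * r0 := h1
          _ = 2 * rk := by rw [hrk]; ring
      have hpack := packing2 (A.image ρ) x0 (rk / s) (2 * rk) (by positivity)
        (by
          intro p hp
          obtain ⟨j, hj, rfl⟩ := Finset.mem_image.mp hp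
          exact (hhigh j hj).le)
        (by
          intro p hp q hq hpq
          obtain ⟨j1, hj1, rfl⟩ := Finset.mem_image.mp hp
          obtain ⟨j2, hj2, rfl⟩ := Finset.mem_image.mp hq
          have hj12 : j1 ≠ j2 := fun h => hpq (by rw [h])
          have hj10 : j1 ≠ 0 := Finset.ne_of_mem_erase (Finset.mem_filter.mp hj1).1
          have hj20 : j2 ≠ 0 := Finset.ne_of_mem_erase (Finset.mem_filter.mp hj2).1
          have hk := key j1 j2 hj10 hj20 hj12
          rw [dist_comm x0 (ρ j2)] at hk
          have h1 := hlow j1 hj1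
          have h2 := hlow j2 hj2
          have h3 : 2 * rk ≤ dist (ρ j1) (ρ j2) * s := by
            rw [mul_comm]; linarith
          calc 2 * (rk / s) = 2 * rk / s := by ring
            _ ≤ dist (ρ j1) (ρ j2) := (div_le_iff₀ hs0).mpr h3)
      have hcardim : (A.image ρ).card = A.card := Finset.card_image_of_injective A hinj
      rw [hcardim] at hpack
      have he : rk / s * s = rk := div_mul_cancel₀ _ hs0.ne'
      have hεpos : 0 < rk / s := by positivity
      have h9 : 0 ≤ 44 * s ^ 2 - 4 * s - 1 := by nlinarith [sq_nonneg (s - 1)]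
      have hmul : (A.card : ℝ) * (rk / s) ^ 2 ≤ 48 * s ^ 2 * (rk / s) ^ 2 := by
        nlinarith [hpack, mul_nonneg h9 (sq_nonneg (rk / s)), he, sq_nonneg (rk / s)]
      exact le_of_mul_le_mul_right hmul (pow_pos hεpos 2)
    have hsum : ((L.card : ℝ)) ≤ (t : ℝ) * (48 * s ^ 2) := by
      rw [hcards]
      push_cast
      calc ∑ k ∈ Finset.range t, ((L.filter fun j => K j = k).card : ℝ)
          ≤ ∑ k ∈ Finset.range t, 48 * s ^ 2 := Finset.sum_le_sum hfib
        _ = (t : ℝ) * (48 * s ^ 2) := by rw [Finset.sum_const, Finset.card_range]; simp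
    have hfloor : (t : ℝ) ≤ ((n : ℝ) - 2) / (48 * s ^ 2) := by
      rw [ht]
      apply Nat.floor_le
      apply div_nonneg
      · have : (2 : ℝ) ≤ n := by exact_mod_cast hn
        linarith
      · positivity
    have h48 : (0 : ℝ) < 48 * s ^ 2 := by positivity
    have hfloor2 : (t : ℝ) * (48 * s ^ 2) ≤ (n : ℝ) - 2 := by
      have := mul_le_mul_of_nonneg_right hfloor h48.le
      rwa [div_mul_cancel₀ _ h48.ne'] at this
    have hcast : ((L.card : ℝ)) = (n : ℝ) - 1 := by
      rw [hLcard]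
      have : (1 : ℕ) ≤ n := le_of_lt h1n
      push_cast [Nat.cast_sub this]
      ring
    rw [hcast] at hsum
    linarith
  obtain ⟨j, hj0, hjge⟩ := claim
  refine ⟨j, 0, i0, 0, ⟨hj0, Or.inr rfl⟩, ⟨hi00, Or.inr rfl⟩, ?_⟩
  exact hjge
end
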